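/- Bound on the Gaussian group-max constant ρ(α*): let Z ∼ N_p(0, I_p), let G_1,…,G_J (J ≥ 2) partition {1,…,p} with max group size p_max ≥ 1, and define ρ(α*) = E[max_{j≤J} ‖Z_{(j)}‖_{α*}/√n]. Then for α* ∈ [1,2], ρ(α*) ≤ p_max^{1/α* − 1/2} ((5 p_max/n)^{1/2} + (4 log J/n)^{1/2}). -/

import Mathlib

open scoped BigOperators
open MeasureTheory ProbabilityTheory
open scoped NNReal ENNReal
lemma my_sqrt_add_le {a b : ℝ} (ha : 0 ≤ a) (hb : 0 ≤ b) :
    Real.sqrt (a + b) ≤ Real.sqrt a + Real.sqrt b := by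
  have h : a + b ≤ (Real.sqrt a + Real.sqrt b) ^ 2 := by
    rw [add_sq, Real.sq_sqrt ha, Real.sq_sqrt hb]
    nlinarith [Real.sqrt_nonneg a, Real.sqrt_nonneg b]
  calc Real.sqrt (a + b) ≤ Real.sqrt ((Real.sqrt a + Real.sqrt b) ^ 2) := Real.sqrt_le_sqrt h
    _ = _ := Real.sqrt_sq (by positivity)

lemma my_sqrt_tangent {x B : ℝ} (hx : 0 ≤ x) (hB : 0 < B) :
    Real.sqrt x ≤ (x + B) / (2 * Real.sqrt B) := by
  rw [le_div_iff₀ (by positivity)]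
  nlinarith [sq_nonneg (Real.sqrt x - Real.sqrt B), Real.sq_sqrt hx, Real.sq_sqrt hB.le,
    Real.sqrt_nonneg x, Real.sqrt_nonneg B]

lemma my_pdf_smul_eq :
    (fun x : ℝ => ((gaussianPDFReal 0 1 x).toNNReal : ℝ≥0) • Real.exp (x ^ 2 / 4))
      = fun x => (Real.sqrt (2 * Real.pi))⁻¹ * Real.exp (-(4⁻¹ : ℝ) * x ^ 2) := by
  funext x
  have h0 : 0 ≤ gaussianPDFReal 0 1 x := (gaussianPDFReal_pos 0 1 x one_ne_zero).le
  rw [NNReal.smul_def, Real.coe_toNNReal _ h0, gaussianPDFReal]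
  push_cast
  rw [smul_eq_mul, mul_one, sub_zero, mul_assoc, ← Real.exp_add]
  ring_nf

lemma my_gaussian_integrable :
    Integrable (fun x : ℝ => Real.exp (x ^ 2 / 4)) (gaussianReal 0 1) := by
  rw [gaussianReal_of_var_ne_zero 0 one_ne_zero]
  have hmeas : Measurable fun x : ℝ => (gaussianPDFReal 0 1 x).toNNReal :=
    (measurable_gaussianPDFReal 0 1).real_toNNReal
  have : volume.withDensity (gaussianPDF 0 1)
      = volume.withDensity fun x => ((gaussianPDFReal 0 1 x).toNNReal : ℝ≥0∞) := rfl
  rw [this, integrable_withDensity_iff_integrable_smul hmeas, my_pdf_smul_eq]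
  exact (integrable_exp_neg_mul_sq (by norm_num)).const_mul _

lemma my_gaussian_integral :
    ∫ x, Real.exp (x ^ 2 / 4) ∂(gaussianReal 0 1) = Real.sqrt 2 := by
  rw [gaussianReal_of_var_ne_zero 0 one_ne_zero]
  have hmeas : Measurable fun x : ℝ => (gaussianPDFReal 0 1 x).toNNReal :=
    (measurable_gaussianPDFReal 0 1).real_toNNReal
  have h : volume.withDensity (gaussianPDF 0 1)
      = volume.withDensity fun x => ((gaussianPDFReal 0 1 x).toNNReal : ℝ≥0∞) := rfl
  rw [h, integral_withDensity_eq_integral_smul hmeas]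
  have := congrFun my_pdf_smul_eq
  rw [MeasureTheory.integral_congr_ae (ae_of_all _ this)]
  rw [MeasureTheory.integral_const_mul, integral_gaussian]
  have h4 : Real.sqrt (Real.pi / 4⁻¹) = 2 * Real.sqrt Real.pi := by
    rw [show Real.pi / 4⁻¹ = 2 ^ 2 * Real.pi by ring,
      Real.sqrt_mul (by positivity), Real.sqrt_sq (by norm_num)]
  rw [h4, Real.sqrt_mul (by norm_num : (0:ℝ) ≤ 2)]
  have hπ : 0 < Real.sqrt Real.pi := Real.sqrt_pos.mpr Real.pi_pos
  have h2 : Real.sqrt 2 * Real.sqrt 2 = 2 := Real.mul_self_sqrt (by norm_num)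
  field_simp
  nlinarith [Real.sqrt_nonneg 2]
lemma my_group_norm_bound {ι : Type*} (s : Finset ι) (a : ι → ℝ) (ha : ∀ i, 0 ≤ a i)
    {αs : ℝ} (hα1 : 1 ≤ αs) (hα2 : αs ≤ 2) (m : ℕ) (hm : s.card ≤ m) :
    (∑ i ∈ s, a i ^ αs) ^ (1 / αs)
      ≤ (m : ℝ) ^ (1 / αs - 1 / 2) * Real.sqrt (∑ i ∈ s, a i ^ (2 : ℕ)) := by
  have hα0 : 0 < αs := lt_of_lt_of_le one_pos hα1
  have hp : 1 ≤ 2 / αs := by rw [le_div_iff₀ hα0]; linarith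
  have key := Real.inner_le_weight_mul_Lp_of_nonneg s hp (fun _ => 1) (fun i => a i ^ αs)
    (fun _ => zero_le_one) (fun i => Real.rpow_nonneg (ha i) _)
  simp only [one_mul] at key
  have hsum1 : (∑ _i ∈ s, (1 : ℝ)) = (s.card : ℝ) := by simp
  have hpow : ∀ i, (a i ^ αs) ^ (2 / αs) = a i ^ (2 : ℕ) := by
    intro i
    rw [← Real.rpow_natCast (a i) 2, ← Real.rpow_mul (ha i)]
    congr 1
    field_simp
    norm_num
  have hinv : (2 / αs)⁻¹ = αs / 2 := by field_simp
  rw [hsum1, hinv] at key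
  simp only [hpow] at key
  set A := ∑ i ∈ s, a i ^ (2 : ℕ) with hA
  have hA0 : 0 ≤ A := Finset.sum_nonneg fun i _ => by positivity
  have hL0 : 0 ≤ ∑ i ∈ s, a i ^ αs :=
    Finset.sum_nonneg fun i _ => Real.rpow_nonneg (ha i) _
  have h1 : (∑ i ∈ s, a i ^ αs) ^ (1 / αs)
      ≤ ((s.card : ℝ) ^ (1 - αs / 2) * A ^ (αs / 2)) ^ (1 / αs) :=
    Real.rpow_le_rpow hL0 key (by positivity)
  refine h1.trans ?_
  have hN0 : (0 : ℝ) ≤ (s.card : ℝ) := Nat.cast_nonneg _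
  rw [Real.mul_rpow (Real.rpow_nonneg hN0 _) (Real.rpow_nonneg hA0 _),
    ← Real.rpow_mul hN0, ← Real.rpow_mul hA0]
  have hne : αs ≠ 0 := hα0.ne'
  have e1 : (1 - αs / 2) * (1 / αs) = 1 / αs - 1 / 2 := by
    field_simp
  have e2 : αs / 2 * (1 / αs) = 1 / 2 := by
    field_simp
  rw [e1, e2, ← Real.sqrt_eq_rpow]
  apply mul_le_mul_of_nonneg_right _ (Real.sqrt_nonneg _)
  apply Real.rpow_le_rpow hN0 (Nat.cast_le.mpr hm)
  have : (1 : ℝ) / 2 ≤ 1 / αs := one_div_le_one_div_of_le hα0 hα2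
  linarith
lemma my_prod_exp {Ω : Type*} [MeasurableSpace Ω] (μ : Measure Ω) [IsProbabilityMeasure μ]
    {p : ℕ} (Z : Fin p → Ω → ℝ) (hmeas : ∀ i, Measurable (Z i))
    (hindep : iIndepFun Z μ)
    (hlaw : ∀ i, Measure.map (Z i) μ = gaussianReal 0 1)
    (s : Finset (Fin p)) :
    Integrable (fun ω => ∏ i ∈ s, Real.exp ((Z i ω) ^ 2 / 4)) μ ∧
      ∫ ω, ∏ i ∈ s, Real.exp ((Z i ω) ^ 2 / 4) ∂μ = Real.sqrt 2 ^ s.card := by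
  set W : Fin p → Ω → ℝ := fun i ω => Real.exp ((Z i ω) ^ 2 / 4) with hW
  have hWmeas : ∀ i, Measurable (W i) := fun i =>
    Real.measurable_exp.comp (((hmeas i).pow_const 2).div_const 4)
  have hWindep : iIndepFun W μ :=
    hindep.comp (fun _ x => Real.exp (x ^ 2 / 4))
      (fun _ => Real.measurable_exp.comp ((measurable_id.pow_const 2).div_const 4))
  have haesm : AEStronglyMeasurable (fun x : ℝ => Real.exp (x ^ 2 / 4)) (gaussianReal 0 1) :=
    (Real.continuous_exp.comp ((continuous_pow 2).div_const 4)).aestronglyMeasurable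
  have hWint : ∀ i, Integrable (W i) μ := by
    intro i
    have h := my_gaussian_integrable
    rw [← hlaw i] at h
    have := (integrable_map_measure (by rw [hlaw i]; exact haesm)
      (hmeas i).aemeasurable).mp h
    exact this
  have hWval : ∀ i, ∫ ω, W i ω ∂μ = Real.sqrt 2 := by
    intro i
    have h : ∫ y, Real.exp (y ^ 2 / 4) ∂(Measure.map (Z i) μ) = ∫ ω, Real.exp ((Z i ω) ^ 2 / 4) ∂μ :=
      integral_map (hmeas i).aemeasurable (by rw [hlaw i]; exact haesm)
    rw [hlaw i, my_gaussian_integral] at h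
    exact h.symm
  induction s using Finset.induction_on with
  | empty => simp
  | @insert a s ha ih =>
    have hIF : IndepFun (∏ j ∈ s, W j) (W a) μ :=
      hWindep.indepFun_finsetProd_of_notMem hWmeas ha
    have hps : (∏ j ∈ s, W j) = fun ω => ∏ i ∈ s, W i ω := by
      funext ω; simp [Finset.prod_apply]
    have hint_s : Integrable (∏ j ∈ s, W j) μ := by rw [hps]; exact ih.1
    have hint : Integrable ((∏ j ∈ s, W j) * W a) μ := hIF.integrable_mul hint_s (hWint a)
    have heq : (fun ω => ∏ i ∈ insert a s, W i ω) = (∏ j ∈ s, W j) * W a := by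
      funext ω
      simp [Finset.prod_insert ha, Finset.prod_apply, mul_comm]
    constructor
    · rw [show (fun ω => ∏ i ∈ insert a s, Real.exp ((Z i ω) ^ 2 / 4))
        = (∏ j ∈ s, W j) * W a from heq]
      exact hint
    · have hmul := hIF.integral_mul_eq_mul_integral hint_s.aestronglyMeasurable (hWint a).aestronglyMeasurable
      calc ∫ ω, ∏ i ∈ insert a s, Real.exp ((Z i ω) ^ 2 / 4) ∂μ
          = ∫ ω, ((∏ j ∈ s, W j) * W a) ω ∂μ := by rw [← heq]
        _ = (∫ ω, (∏ j ∈ s, W j) ω ∂μ) * ∫ ω, W a ω ∂μ := hmul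
        _ = Real.sqrt 2 ^ s.card * Real.sqrt 2 := by
            rw [hWval a, hps, ih.2]
        _ = Real.sqrt 2 ^ (insert a s).card := by
            rw [Finset.card_insert_of_notMem ha, pow_succ]

/-- Bound on the Gaussian group-max constant ρ(α*): for Z ∼ N_p(0,I_p), groups
G_1,…,G_J (J ≥ 2) partitioning the coordinates with max group size p_max ≥ 1, and
α* ∈ [1,2], one has E[max_j ‖Z_{(j)}‖_{α*}/√n] ≤ p_max^{1/α*−1/2}(√(5p_max/n) + √(4 log J/n)). -/
theorem gaussian_group_max_bound {Ω : Type*} [MeasurableSpace Ω]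
    (μ : Measure Ω) [IsProbabilityMeasure μ]
    {p J n : ℕ} (hJ : 2 ≤ J) (hn : 0 < n)
    (g : Fin p → Fin J) (pmax : ℕ) (hpmax : 1 ≤ pmax)
    (hsize : ∀ j, (Finset.univ.filter (fun i => g i = j)).card ≤ pmax)
    (Z : Fin p → Ω → ℝ) (hmeas : ∀ i, Measurable (Z i))
    (hindep : iIndepFun Z μ)
    (hlaw : ∀ i, Measure.map (Z i) μ = gaussianReal 0 1)
    (αs : ℝ) (hαs : αs ∈ Set.Icc (1 : ℝ) 2)
    (ρ : ℝ)
    (hρ : ρ = ∫ ω, (Finset.univ.sup'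
        (⟨⟨0, by omega⟩, Finset.mem_univ _⟩ : (Finset.univ : Finset (Fin J)).Nonempty)
        fun j => (∑ i ∈ Finset.univ.filter (fun i => g i = j), |Z i ω| ^ αs) ^ (1 / αs)
          / Real.sqrt n) ∂μ) :
    ρ ≤ (pmax : ℝ) ^ (1 / αs - 1 / 2) *
      (Real.sqrt (5 * pmax / n) + Real.sqrt (4 * Real.log J / n)) := by
  classical
  obtain ⟨hα1, hα2⟩ := hαs
  have hα0 : 0 < αs := lt_of_lt_of_le one_pos hα1
  have j0 : Fin J := ⟨0, by omega⟩
  have hne : (Finset.univ : Finset (Fin J)).Nonempty := ⟨⟨0, by omega⟩, Finset.mem_univ _⟩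
  set E : Fin J → Finset (Fin p) := fun j => Finset.univ.filter (fun i => g i = j) with hE
  set S : Fin J → Ω → ℝ := fun j ω => ∑ i ∈ E j, (Z i ω) ^ 2 with hSdef
  have hS_meas : ∀ j, Measurable (S j) :=
    fun j => Finset.measurable_sum _ fun i _ => (hmeas i).pow_const 2
  have hS_nonneg : ∀ j ω, 0 ≤ S j ω := fun j ω => Finset.sum_nonneg fun i _ => sq_nonneg _
  set Y : Ω → ℝ := fun ω => ∑ j : Fin J, Real.exp (S j ω / 4) with hYdef
  have hexp_prod : ∀ j ω, Real.exp (S j ω / 4) = ∏ i ∈ E j, Real.exp ((Z i ω) ^ 2 / 4) := by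
    intro j ω
    rw [← Real.exp_sum]
    congr 1
    rw [hSdef, Finset.sum_div]
  have hprod := fun s => my_prod_exp μ Z hmeas hindep hlaw s
  have hYj_int : ∀ j, Integrable (fun ω => Real.exp (S j ω / 4)) μ := by
    intro j
    have := (hprod (E j)).1
    simp only [← hexp_prod j] at this
    exact this
  have hYj_val : ∀ j, ∫ ω, Real.exp (S j ω / 4) ∂μ = Real.sqrt 2 ^ (E j).card := by
    intro j
    have := (hprod (E j)).2
    simp only [← hexp_prod j] at this
    exact this
  have hY_int : Integrable Y μ := integrable_finset_sum _ fun j _ => hYj_int j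
  set c : ℝ := ∫ ω, Y ω ∂μ with hcdef
  have hc_eq : c = ∑ j : Fin J, Real.sqrt 2 ^ (E j).card := by
    rw [hcdef, hYdef]
    rw [integral_finset_sum _ fun j _ => hYj_int j]
    exact Finset.sum_congr rfl fun j _ => hYj_val j
  have hsqrt2_ge1 : (1 : ℝ) ≤ Real.sqrt 2 := by
    rw [show (1 : ℝ) = Real.sqrt 1 from Real.sqrt_one.symm]
    exact Real.sqrt_le_sqrt (by norm_num)
  have hc_ge : (J : ℝ) ≤ c := by
    rw [hc_eq]
    calc (J : ℝ) = ∑ _j : Fin J, (1 : ℝ) := by simp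
      _ ≤ _ := Finset.sum_le_sum fun j _ => one_le_pow₀ hsqrt2_ge1
  have hc_pos : 0 < c := lt_of_lt_of_le (by exact_mod_cast lt_of_lt_of_le two_pos hJ) hc_ge
  have hc_le : c ≤ (J : ℝ) * Real.sqrt 2 ^ pmax := by
    rw [hc_eq]
    calc ∑ j : Fin J, Real.sqrt 2 ^ (E j).card
        ≤ ∑ _j : Fin J, Real.sqrt 2 ^ pmax :=
          Finset.sum_le_sum fun j _ => pow_le_pow_right₀ hsqrt2_ge1 (hsize j)
      _ = (J : ℝ) * Real.sqrt 2 ^ pmax := by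
          rw [Finset.sum_const, Finset.card_univ, Fintype.card_fin, nsmul_eq_mul]
  have hY_ge : ∀ ω (j : Fin J), Real.exp (S j ω / 4) ≤ Y ω := by
    intro ω j
    exact Finset.single_le_sum (f := fun k => Real.exp (S k ω / 4))
      (fun k _ => (Real.exp_pos _).le) (Finset.mem_univ j)
  have hY_pos : ∀ ω, 0 < Y ω :=
    fun ω => Finset.sum_pos (fun j _ => Real.exp_pos _) hne
  have hY_meas : Measurable Y :=
    Finset.measurable_sum _ fun j _ => Real.measurable_exp.comp ((hS_meas j).div_const 4)
  have hlogY_nonneg : ∀ ω, 0 ≤ Real.log (Y ω) := by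
    intro ω
    apply Real.log_nonneg
    calc (1 : ℝ) ≤ Real.exp (S j0 ω / 4) :=
          Real.one_le_exp (div_nonneg (hS_nonneg j0 ω) (by norm_num))
      _ ≤ Y ω := hY_ge ω j0
  have hlog_pt : ∀ ω, Real.log (Y ω) ≤ Y ω / c - 1 + Real.log c := by
    intro ω
    have h := Real.log_le_sub_one_of_pos (div_pos (hY_pos ω) hc_pos)
    rw [Real.log_div (hY_pos ω).ne' hc_pos.ne'] at h
    linarith
  have hlogY_meas : Measurable fun ω => Real.log (Y ω) := Real.measurable_log.comp hY_meas
  have hbound_int : Integrable (fun ω => Y ω / c - 1 + Real.log c) μ :=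
    ((hY_int.div_const c).sub (integrable_const 1)).add (integrable_const _)
  have hlogY_int : Integrable (fun ω => Real.log (Y ω)) μ := by
    apply hbound_int.mono' hlogY_meas.aestronglyMeasurable
    filter_upwards with ω
    rw [Real.norm_eq_abs, abs_of_nonneg (hlogY_nonneg ω)]
    exact hlog_pt ω
  have hElog : ∫ ω, Real.log (Y ω) ∂μ ≤ Real.log c := by
    have h1 : ∫ ω, Real.log (Y ω) ∂μ ≤ ∫ ω, (Y ω / c - 1 + Real.log c) ∂μ :=
      integral_mono hlogY_int hbound_int hlog_pt
    have h2 : ∫ ω, (Y ω / c - 1 + Real.log c) ∂μ = c / c - 1 + Real.log c := by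
      have i0 : Integrable (fun ω => Y ω / c) μ := hY_int.div_const c
      have i1 : Integrable (fun ω => Y ω / c - 1) μ := i0.sub (integrable_const 1)
      rw [integral_add i1 (integrable_const _), integral_sub i0 (integrable_const 1),
        integral_div]
      simp [integral_const, ← hcdef]
    rw [h2, div_self hc_pos.ne'] at h1
    linarith
  set M : Ω → ℝ := fun ω => Finset.univ.sup' hne fun j => S j ω with hMdef
  have hM_meas : Measurable M := by
    have h := Finset.measurable_sup' hne fun j (_ : j ∈ Finset.univ) => hS_meas j
    have heq : Finset.univ.sup' hne S = M := by
      funext ω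
      rw [hMdef, Finset.sup'_apply]
    rwa [heq] at h
  have hM_ge : ∀ ω (j : Fin J), S j ω ≤ M ω := fun ω j =>
    Finset.le_sup' (f := fun k => S k ω) (Finset.mem_univ j)
  have hM_nonneg : ∀ ω, 0 ≤ M ω :=
    fun ω => le_trans (hS_nonneg j0 ω) (hM_ge ω j0)
  have hM_le_log : ∀ ω, M ω ≤ 4 * Real.log (Y ω) := by
    intro ω
    apply Finset.sup'_le
    intro j _
    have h1 : Real.exp (S j ω / 4) ≤ Y ω := hY_ge ω j
    have h2 : S j ω / 4 ≤ Real.log (Y ω) := (Real.le_log_iff_exp_le (hY_pos ω)).mpr h1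
    linarith
  have hM_int : Integrable M μ := by
    apply (hlogY_int.const_mul 4).mono' hM_meas.aestronglyMeasurable
    filter_upwards with ω
    rw [Real.norm_eq_abs, abs_of_nonneg (hM_nonneg ω)]
    exact hM_le_log ω
  set B : ℝ := 5 * pmax + 4 * Real.log J with hBdef
  have hlogJ : 0 < Real.log J := Real.log_pos (by exact_mod_cast lt_of_lt_of_le one_lt_two hJ)
  have hp1 : (1 : ℝ) ≤ (pmax : ℝ) := by exact_mod_cast hpmax
  have hB_pos : 0 < B := by rw [hBdef]; linarith
  have hEM : ∫ ω, M ω ∂μ ≤ B := by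
    have hlog2 : Real.log 2 ≤ 1 := by
      have := Real.log_le_sub_one_of_pos (by norm_num : (0:ℝ) < 2)
      linarith
    calc ∫ ω, M ω ∂μ ≤ ∫ ω, 4 * Real.log (Y ω) ∂μ :=
          integral_mono hM_int (hlogY_int.const_mul 4) hM_le_log
      _ = 4 * ∫ ω, Real.log (Y ω) ∂μ := integral_const_mul 4 _
      _ ≤ 4 * Real.log c := by linarith
      _ ≤ 4 * Real.log ((J : ℝ) * Real.sqrt 2 ^ pmax) := by
          have := Real.log_le_log hc_pos hc_le
          linarith
      _ = 4 * (Real.log J + (pmax : ℝ) * (Real.log 2 / 2)) := by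
          rw [Real.log_mul (Nat.cast_ne_zero.mpr (by omega)) (by positivity), Real.log_pow,
            Real.log_sqrt (by norm_num)]
      _ ≤ B := by rw [hBdef]; nlinarith
  have hsqrtM_pt : ∀ ω, Real.sqrt (M ω) ≤ (M ω + B) / (2 * Real.sqrt B) :=
    fun ω => my_sqrt_tangent (hM_nonneg ω) hB_pos
  have hbound2_int : Integrable (fun ω => (M ω + B) / (2 * Real.sqrt B)) μ :=
    (hM_int.add (integrable_const B)).div_const _
  have hsqrtM_meas : Measurable fun ω => Real.sqrt (M ω) :=
    Real.continuous_sqrt.measurable.comp hM_meas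
  have hsqrtM_int : Integrable (fun ω => Real.sqrt (M ω)) μ := by
    apply hbound2_int.mono' hsqrtM_meas.aestronglyMeasurable
    filter_upwards with ω
    rw [Real.norm_eq_abs, abs_of_nonneg (Real.sqrt_nonneg _)]
    exact hsqrtM_pt ω
  have hEsqrtM : ∫ ω, Real.sqrt (M ω) ∂μ ≤ Real.sqrt B := by
    have hsB : 0 < Real.sqrt B := Real.sqrt_pos.mpr hB_pos
    calc ∫ ω, Real.sqrt (M ω) ∂μ ≤ ∫ ω, (M ω + B) / (2 * Real.sqrt B) ∂μ :=
          integral_mono hsqrtM_int hbound2_int hsqrtM_pt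
      _ = ((∫ ω, M ω ∂μ) + B) / (2 * Real.sqrt B) := by
          rw [integral_div, integral_add hM_int (integrable_const B)]
          simp
      _ ≤ (B + B) / (2 * Real.sqrt B) := by
          gcongr
      _ = Real.sqrt B := by
          rw [show B + B = 2 * B by ring, mul_div_mul_left _ _ (two_ne_zero), Real.div_sqrt]
  set C : ℝ := (pmax : ℝ) ^ (1 / αs - 1 / 2) with hCdef
  have hC_nonneg : 0 ≤ C := Real.rpow_nonneg (Nat.cast_nonneg _) _
  have hsn_pos : (0 : ℝ) < Real.sqrt n := Real.sqrt_pos.mpr (by exact_mod_cast hn)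
  have hT_le : ∀ (j : Fin J) ω,
      (∑ i ∈ E j, |Z i ω| ^ αs) ^ (1 / αs) ≤ C * Real.sqrt (M ω) := by
    intro j ω
    have h1 := my_group_norm_bound (E j) (fun i => |Z i ω|) (fun i => abs_nonneg _)
      hα1 hα2 pmax (hsize j)
    have h2 : (∑ i ∈ E j, |Z i ω| ^ (2 : ℕ)) = S j ω :=
      Finset.sum_congr rfl fun i _ => sq_abs _
    rw [h2] at h1
    refine h1.trans ?_
    exact mul_le_mul_of_nonneg_left (Real.sqrt_le_sqrt (hM_ge ω j)) hC_nonneg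
  set h : Ω → ℝ := fun ω => Finset.univ.sup' hne
      fun j => (∑ i ∈ E j, |Z i ω| ^ αs) ^ (1 / αs) / Real.sqrt n with hhdef
  have hh_le : ∀ ω, h ω ≤ C * Real.sqrt (M ω) / Real.sqrt n := by
    intro ω
    apply Finset.sup'_le
    intro j _
    exact div_le_div_of_nonneg_right (hT_le j ω) hsn_pos.le
  have hh_nonneg : ∀ ω, 0 ≤ h ω := by
    intro ω
    refine le_trans ?_ (Finset.le_sup'
      (f := fun j => (∑ i ∈ E j, |Z i ω| ^ αs) ^ (1 / αs) / Real.sqrt n)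
      (Finset.mem_univ j0))
    positivity
  have hh_meas : Measurable h := by
    have hterm : ∀ j : Fin J,
        Measurable fun ω => (∑ i ∈ E j, |Z i ω| ^ αs) ^ (1 / αs) / Real.sqrt n := by
      intro j
      apply Measurable.div_const
      apply (Real.continuous_rpow_const (by positivity)).measurable.comp
      exact Finset.measurable_sum _ fun i _ =>
        (Real.continuous_rpow_const hα0.le).measurable.comp (hmeas i).abs
    have hsup := Finset.measurable_sup' hne fun j (_ : j ∈ Finset.univ) => hterm j
    have heq : Finset.univ.sup'
        hne (fun j ω => (∑ i ∈ E j, |Z i ω| ^ αs) ^ (1 / αs) / Real.sqrt n) = h := by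
      funext ω
      rw [hhdef, Finset.sup'_apply]
    rwa [heq] at hsup
  have hbound3_int : Integrable (fun ω => C * Real.sqrt (M ω) / Real.sqrt n) μ :=
    (hsqrtM_int.const_mul C).div_const _
  have hh_int : Integrable h μ := by
    apply hbound3_int.mono' hh_meas.aestronglyMeasurable
    filter_upwards with ω
    rw [Real.norm_eq_abs, abs_of_nonneg (hh_nonneg ω)]
    exact hh_le ω
  have hρ' : ρ = ∫ ω, h ω ∂μ := hρ
  have hstep : ρ ≤ C * (∫ ω, Real.sqrt (M ω) ∂μ) / Real.sqrt n := by
    rw [hρ']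
    calc ∫ ω, h ω ∂μ ≤ ∫ ω, C * Real.sqrt (M ω) / Real.sqrt n ∂μ :=
          integral_mono hh_int hbound3_int hh_le
      _ = C * (∫ ω, Real.sqrt (M ω) ∂μ) / Real.sqrt n := by
          rw [integral_div, integral_const_mul]
  have h4 : Real.sqrt B / Real.sqrt n = Real.sqrt (B / n) := (Real.sqrt_div hB_pos.le n).symm
  have h5 : B / (n : ℝ) = 5 * pmax / n + 4 * Real.log J / n := by rw [hBdef, add_div]
  have h6 : Real.sqrt (B / n) ≤ Real.sqrt (5 * pmax / n) + Real.sqrt (4 * Real.log J / n) := by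
    rw [h5]
    exact my_sqrt_add_le (by positivity) (div_nonneg (by linarith) (Nat.cast_nonneg n))
  calc ρ ≤ C * (∫ ω, Real.sqrt (M ω) ∂μ) / Real.sqrt n := hstep
    _ ≤ C * Real.sqrt B / Real.sqrt n :=
        div_le_div_of_nonneg_right (mul_le_mul_of_nonneg_left hEsqrtM hC_nonneg) hsn_pos.le
    _ = C * (Real.sqrt B / Real.sqrt n) := by ring
    _ = C * Real.sqrt (B / n) := by rw [h4]
    _ ≤ C * (Real.sqrt (5 * pmax / n) + Real.sqrt (4 * Real.log J / n)) :=
        mul_le_mul_of_nonneg_left h6 hC_nonneg
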